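/- Let K ∈ ℂ with Re K ≥ 0, E₀ > 0, ε > 0, σ ∈ ℝ, ρ > 1, κ ≥ 0, c₀ > 0, and t₀ ≥ 1 with c₀⁻¹⟨σ⟩ < t₀ < c₀⟨σ⟩, where ⟨σ⟩ = sqrt(1+σ²). Suppose |z₀| ≤ E₀ε⟨σ⟩^{-κ-ρ+1} and |J(t)| ≤ E₀ε⟨σ⟩^{-κ}t^{-ρ} for t ≥ t₀. Then the unique global C¹ solution z of z'(t) = -(K/(2t))|z(t)|²z(t) + J(t), z(t₀) = z₀, satisfies |z(t)| ≤ C₀ ε ⟨σ⟩^{-κ-ρ+1} for all t ≥ t₀, where C₀ = E₀(1 + c₀^{ρ-1}/(ρ-1)). -/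

import Mathlib

open Real Set Filter

noncomputable section CubicAux

/-- radial truncation at radius `M` -/
def ctrunc (M : ℝ) (z : ℂ) : ℂ := if ‖z‖ ≤ M then z else (M / ‖z‖) • z

lemma ctrunc_norm {M : ℝ} (hM : 0 ≤ M) (z : ℂ) : ‖ctrunc M z‖ = min ‖z‖ M := by
  unfold ctrunc
  split_ifs with h
  · rw [min_eq_left h]
  · push_neg at h
    have hz : 0 < ‖z‖ := lt_of_le_of_lt hM h
    rw [norm_smul, min_eq_right h.le, Real.norm_eq_abs, abs_of_nonneg (by positivity)]
    rw [div_mul_cancel₀ _ (ne_of_gt hz)]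

lemma ctrunc_smul {M : ℝ} (hM : 0 ≤ M) (z : ℂ) : ∃ c : ℝ, 0 ≤ c ∧ ctrunc M z = c • z := by
  unfold ctrunc
  split_ifs with h
  · exact ⟨1, zero_le_one, (one_smul _ _).symm⟩
  · push_neg at h
    have hz : 0 < ‖z‖ := lt_of_le_of_lt hM h
    exact ⟨M / ‖z‖, by positivity, rfl⟩

lemma ctrunc_lip {M : ℝ} (hM : 0 ≤ M) (z w : ℂ) :
    ‖ctrunc M z - ctrunc M w‖ ≤ 2 * ‖z - w‖ := by
  have key : ∀ a b : ℂ, ‖a‖ ≤ M → M < ‖b‖ → ‖a - (M / ‖b‖) • b‖ ≤ 2 * ‖a - b‖ := by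
    intro a b ha hb
    have hbpos : 0 < ‖b‖ := lt_of_le_of_lt hM hb
    have h1 : ‖a - (M / ‖b‖) • b‖ ≤ ‖a - b‖ + ‖b - (M / ‖b‖) • b‖ := by
      calc ‖a - (M / ‖b‖) • b‖ = ‖(a - b) + (b - (M / ‖b‖) • b)‖ := by ring_nf
        _ ≤ ‖a - b‖ + ‖b - (M / ‖b‖) • b‖ := norm_add_le _ _
    have h2 : ‖b - (M / ‖b‖) • b‖ = ‖b‖ - M := by
      have : b - (M / ‖b‖) • b = (1 - M / ‖b‖) • b := by
        rw [sub_smul, one_smul]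
      rw [this, norm_smul, Real.norm_eq_abs, abs_of_nonneg]
      · rw [sub_mul, one_mul, div_mul_cancel₀ _ (ne_of_gt hbpos)]
      · rw [sub_nonneg, div_le_one hbpos]; exact hb.le
    have h3 : ‖b‖ - M ≤ ‖a - b‖ := by
      have := norm_sub_norm_le b a
      rw [norm_sub_rev] at this
      have hamerican : ‖b‖ - ‖a‖ ≤ ‖a - b‖ := this
      linarith [ha]
    linarith [h1, h2, h3]
  unfold ctrunc
  split_ifs with h1 h2 h2
  · linarith [norm_nonneg (z - w)]
  · push_neg at h2; exact key z w h1 h2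
  · push_neg at h1
    calc ‖(M / ‖z‖) • z - w‖ = ‖w - (M / ‖z‖) • z‖ := norm_sub_rev _ _
      _ ≤ 2 * ‖w - z‖ := key w z h2 h1
      _ = 2 * ‖z - w‖ := by rw [norm_sub_rev]
  · push_neg at h1 h2
    have hz : 0 < ‖z‖ := lt_of_le_of_lt hM h1
    have hw : 0 < ‖w‖ := lt_of_le_of_lt hM h2
    have h1' : ‖(M / ‖z‖) • z - (M / ‖w‖) • w‖
        ≤ ‖(M / ‖z‖) • z - (M / ‖z‖) • w‖ + ‖(M / ‖z‖) • w - (M / ‖w‖) • w‖ := by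
      calc ‖(M / ‖z‖) • z - (M / ‖w‖) • w‖
          = ‖((M / ‖z‖) • z - (M / ‖z‖) • w) + ((M / ‖z‖) • w - (M / ‖w‖) • w)‖ := by ring_nf
        _ ≤ _ := norm_add_le _ _
    have h2' : ‖(M / ‖z‖) • z - (M / ‖z‖) • w‖ = (M / ‖z‖) * ‖z - w‖ := by
      rw [← smul_sub, norm_smul, Real.norm_eq_abs, abs_of_nonneg (by positivity)]
    have h3' : ‖(M / ‖z‖) • w - (M / ‖w‖) • w‖ = |M / ‖z‖ - M / ‖w‖| * ‖w‖ := by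
      rw [← sub_smul, norm_smul, Real.norm_eq_abs]
    have h4' : |M / ‖z‖ - M / ‖w‖| * ‖w‖ ≤ (M / ‖z‖) * ‖z - w‖ := by
      have : M / ‖z‖ - M / ‖w‖ = M * (‖w‖ - ‖z‖) / (‖z‖ * ‖w‖) := by
        rw [div_sub_div _ _ hz.ne' hw.ne']
        congr 1
        ring
      rw [this, abs_div, abs_mul, abs_of_nonneg hM, abs_of_nonneg (by positivity : (0:ℝ) ≤ ‖z‖ * ‖w‖)]
      have hnn : |‖w‖ - ‖z‖| ≤ ‖z - w‖ := by
        rw [norm_sub_rev]; exact abs_norm_sub_norm_le w z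
      calc M * |‖w‖ - ‖z‖| / (‖z‖ * ‖w‖) * ‖w‖ = M / ‖z‖ * |‖w‖ - ‖z‖| := by
            rw [← div_div, div_mul_cancel₀ _ hw.ne', div_mul_eq_mul_div]
        _ ≤ M / ‖z‖ * ‖z - w‖ := by
            apply mul_le_mul_of_nonneg_left hnn (by positivity)
    have h5' : M / ‖z‖ ≤ 1 := by rw [div_le_one hz]; exact h1.le
    have h6' : (M / ‖z‖) * ‖z - w‖ ≤ ‖z - w‖ := by
      nlinarith [norm_nonneg (z - w)]
    linarith

/-- truncated cubic nonlinearity -/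
def gcube (M : ℝ) (z : ℂ) : ℂ := ((min ‖z‖ M)^2 : ℝ) • ctrunc M z

lemma gcube_eq {M : ℝ} {z : ℂ} (h : ‖z‖ ≤ M) : gcube M z = ((‖z‖^2 : ℝ) : ℂ) * z := by
  unfold gcube ctrunc
  rw [if_pos h, min_eq_left h, Complex.real_smul]

lemma gcube_norm_le {M : ℝ} (hM : 0 ≤ M) (z : ℂ) : ‖gcube M z‖ ≤ M^3 := by
  unfold gcube
  rw [norm_smul, ctrunc_norm hM, Real.norm_eq_abs]
  have h1 : 0 ≤ min ‖z‖ M := le_min (norm_nonneg z) hM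
  have h2 : min ‖z‖ M ≤ M := min_le_right _ _
  rw [abs_of_nonneg (by positivity)]
  calc (min ‖z‖ M)^2 * (min ‖z‖ M) = (min ‖z‖ M)^3 := by ring
    _ ≤ M^3 := pow_le_pow_left₀ h1 h2 3

lemma gcube_smul {M : ℝ} (hM : 0 ≤ M) (z : ℂ) : ∃ c : ℝ, 0 ≤ c ∧ gcube M z = c • z := by
  obtain ⟨c, hc, hcz⟩ := ctrunc_smul hM z
  exact ⟨(min ‖z‖ M)^2 * c, by positivity, by rw [gcube, hcz, smul_smul]⟩

lemma gcube_lip {M : ℝ} (hM : 0 ≤ M) (z w : ℂ) :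
    ‖gcube M z - gcube M w‖ ≤ 4 * M^2 * ‖z - w‖ := by
  have h0 : ∀ x : ℂ, 0 ≤ min ‖x‖ M := fun x => le_min (norm_nonneg x) hM
  have hM' : ∀ x : ℂ, min ‖x‖ M ≤ M := fun x => min_le_right _ _
  have split : gcube M z - gcube M w
      = ((min ‖z‖ M)^2 : ℝ) • (ctrunc M z - ctrunc M w)
        + (((min ‖z‖ M)^2 - (min ‖w‖ M)^2 : ℝ)) • ctrunc M w := by
    unfold gcube; rw [smul_sub, sub_smul]; abel
  rw [split]
  have e1 : ‖((min ‖z‖ M)^2 : ℝ) • (ctrunc M z - ctrunc M w)‖ ≤ M^2 * (2 * ‖z - w‖) := by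
    rw [norm_smul, Real.norm_eq_abs, abs_of_nonneg (by positivity)]
    have h2 : (min ‖z‖ M)^2 ≤ M^2 := by nlinarith [h0 z, hM' z]
    exact mul_le_mul h2 (ctrunc_lip hM z w) (norm_nonneg _) (sq_nonneg M)
  have e2 : ‖(((min ‖z‖ M)^2 - (min ‖w‖ M)^2 : ℝ)) • ctrunc M w‖ ≤ 2 * M^2 * ‖z - w‖ := by
    rw [norm_smul, Real.norm_eq_abs, ctrunc_norm hM]
    have hd : |min ‖z‖ M - min ‖w‖ M| ≤ ‖z - w‖ := by
      have h1 : |min ‖z‖ M - min ‖w‖ M| ≤ max |‖z‖ - ‖w‖| |M - M| :=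
        abs_min_sub_min_le_max _ _ _ _
      have h2 : max |‖z‖ - ‖w‖| |M - M| = |‖z‖ - ‖w‖| := by
        simp [abs_nonneg]
      rw [h2] at h1
      exact h1.trans (abs_norm_sub_norm_le z w)
    have hsum : min ‖z‖ M + min ‖w‖ M ≤ 2 * M := by
      have := hM' z; have := hM' w; linarith
    have hfac : |(min ‖z‖ M)^2 - (min ‖w‖ M)^2|
        = |min ‖z‖ M - min ‖w‖ M| * (min ‖z‖ M + min ‖w‖ M) := by
      rw [show (min ‖z‖ M)^2 - (min ‖w‖ M)^2
        = (min ‖z‖ M - min ‖w‖ M) * (min ‖z‖ M + min ‖w‖ M) by ring, abs_mul,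
        abs_of_nonneg (by positivity : (0:ℝ) ≤ min ‖z‖ M + min ‖w‖ M)]
    rw [hfac]
    calc |min ‖z‖ M - min ‖w‖ M| * (min ‖z‖ M + min ‖w‖ M) * (min ‖w‖ M)
        ≤ ‖z - w‖ * (2 * M) * M := by
          apply mul_le_mul _ (hM' w) (h0 w) (by positivity)
          exact mul_le_mul hd hsum (by have := h0 z; have := h0 w; linarith) (norm_nonneg _)
      _ = 2 * M^2 * ‖z - w‖ := by ring
  calc _ ≤ ‖_‖ + ‖_‖ := norm_add_le _ _
    _ ≤ M^2 * (2 * ‖z - w‖) + 2 * M^2 * ‖z - w‖ := add_le_add e1 e2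
    _ = 4 * M^2 * ‖z - w‖ := by ring

end CubicAux


lemma global_ode_exists (v : ℝ → ℂ → ℂ) (L : NNReal) (Cb t₀ : ℝ) (z₀ : ℂ) (hCb0 : 0 ≤ Cb)
    (hvlip : ∀ t, LipschitzWith L (v t))
    (hvcont : ∀ x, Continuous fun t => v t x)
    (hvnorm : ∀ t x, ‖v t x‖ ≤ Cb) :
    ∃ z : ℝ → ℂ, z t₀ = z₀ ∧ ContinuousOn z (Set.Ici t₀) ∧
      ∀ t, t₀ < t → HasDerivAt z (v t (z t)) t := by
  have hexist : ∀ n : ℕ, ∃ f : ℝ → ℂ, f t₀ = z₀ ∧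
      ∀ t ∈ Icc t₀ (t₀ + n + 1), HasDerivWithinAt f (v t (f t)) (Icc t₀ (t₀ + n + 1)) t := by
    intro n
    have hn0 : (0:ℝ) ≤ (n:ℝ) + 1 := by positivity
    have hpl : IsPicardLindelof v (tmin := t₀) (tmax := t₀ + n + 1)
        ⟨t₀, le_refl _, by linarith [n.cast_nonneg (α := ℝ)]⟩ z₀
        (Cb * ((n:ℝ)+1)).toNNReal 0 Cb.toNNReal L :=
      { lipschitzOnWith := fun t _ => (hvlip t).lipschitzOnWith
        continuousOn := fun x _ => (hvcont x).continuousOn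
        norm_le := fun t _ x _ => (hvnorm t x).trans (Real.le_coe_toNNReal Cb)
        mul_max_le := by
          have h1 : max (t₀ + n + 1 - t₀) (t₀ - t₀) = (n:ℝ) + 1 := by
            rw [max_eq_left (by linarith [n.cast_nonneg (α := ℝ)])]
            ring
          simp only [h1, NNReal.coe_zero, sub_zero, Real.coe_toNNReal _ hCb0,
            Real.coe_toNNReal _ (mul_nonneg hCb0 hn0)]
          exact le_refl _ }
    exact hpl.exists_eq_forall_mem_Icc_hasDerivWithinAt₀
  choose F hF0 hFd using hexist
  have hvl : ∀ τ : ℝ, LipschitzOnWith L (v τ) univ := fun τ => (hvlip τ).lipschitzOnWith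
  have huniq : ∀ (m n : ℕ) (t : ℝ), t ∈ Icc t₀ (t₀+(m:ℝ)+1) → t ∈ Icc t₀ (t₀+(n:ℝ)+1) →
      F m t = F n t := by
    intro m n t htm htn
    have key : EqOn (F m) (F n) (Icc t₀ (min (t₀+(m:ℝ)+1) (t₀+(n:ℝ)+1))) := by
      apply ODE_solution_unique_of_mem_Icc_right (fun τ _ => hvl τ)
      · intro x hx
        exact ((hFd m x ⟨hx.1, hx.2.trans (min_le_left _ _)⟩).continuousWithinAt).mono
          (Icc_subset_Icc le_rfl (min_le_left _ _))
      · intro x hx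
        exact (hFd m x ⟨hx.1, hx.2.le.trans (min_le_left _ _)⟩).mono_of_mem_nhdsWithin
          (Icc_mem_nhdsGE_of_mem ⟨hx.1, hx.2.trans_le (min_le_left _ _)⟩)
      · exact fun x _ => mem_univ _
      · intro x hx
        exact ((hFd n x ⟨hx.1, hx.2.trans (min_le_right _ _)⟩).continuousWithinAt).mono
          (Icc_subset_Icc le_rfl (min_le_right _ _))
      · intro x hx
        exact (hFd n x ⟨hx.1, hx.2.le.trans (min_le_right _ _)⟩).mono_of_mem_nhdsWithin
          (Icc_mem_nhdsGE_of_mem ⟨hx.1, hx.2.trans_le (min_le_right _ _)⟩)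
      · exact fun x _ => mem_univ _
      · rw [hF0, hF0]
    exact key ⟨htm.1, le_min htm.2 htn.2⟩
  obtain ⟨z, hz_def⟩ : ∃ z : ℝ → ℂ, z = fun t => F ⌈t - t₀⌉₊ t := ⟨_, rfl⟩
  have hzF : ∀ (n : ℕ) (t : ℝ), t ∈ Icc t₀ (t₀+(n:ℝ)+1) → z t = F n t := by
    intro n t htI
    rw [hz_def]
    exact huniq _ n t ⟨htI.1, by have h := Nat.le_ceil (t - t₀); linarith⟩ htI
  have hmem0 : ∀ t : ℝ, t₀ ≤ t → t ∈ Icc t₀ (t₀ + (⌈t - t₀⌉₊:ℝ) + 1) := by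
    intro t ht
    have h := Nat.le_ceil (t - t₀)
    exact ⟨ht, by linarith⟩
  refine ⟨z, ?_, ?_, ?_⟩
  · rw [hzF 0 t₀ ⟨le_rfl, by norm_num⟩, hF0]
  · intro t ht
    have ht' : t₀ ≤ t := ht
    have h1 := Nat.le_ceil (t - t₀)
    have hmem' : Icc t₀ (t₀ + (⌈t - t₀⌉₊:ℝ) + 1) ∈ nhdsWithin t (Ici t₀) := by
      rw [← Set.Ici_inter_Iic]
      exact Filter.inter_mem self_mem_nhdsWithin
        (mem_nhdsWithin_of_mem_nhds (Iic_mem_nhds (by linarith)))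
    have hFc : ContinuousWithinAt (F ⌈t - t₀⌉₊) (Icc t₀ (t₀ + (⌈t - t₀⌉₊:ℝ) + 1)) t :=
      (hFd _ t (hmem0 t ht')).continuousWithinAt
    exact (hFc.mono_of_mem_nhdsWithin hmem').congr_of_eventuallyEq
      (Filter.eventuallyEq_of_mem hmem' (fun x hx => hzF _ x hx))
      (hzF _ t (hmem0 t ht'))
  · intro t ht
    have h1 := Nat.le_ceil (t - t₀)
    have hnb : Icc t₀ (t₀ + (⌈t - t₀⌉₊:ℝ) + 1) ∈ nhds t :=
      Icc_mem_nhds ht (by linarith)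
    have hd := (hFd _ t (hmem0 t ht.le)).hasDerivAt hnb
    have heq : z =ᶠ[nhds t] F ⌈t - t₀⌉₊ :=
      Filter.eventuallyEq_of_mem hnb (fun x hx => hzF _ x hx)
    have h2 := hd.congr_of_eventuallyEq heq
    rwa [hzF _ t (hmem0 t ht.le)]


lemma dissip_sq_deriv {z w : ℝ → ℂ} {t : ℝ} (hz : HasDerivAt z (w t) t) :
    HasDerivAt (fun τ => Complex.normSq (z τ))
      (2 * ((z t).re * (w t).re + (z t).im * (w t).im)) t := by
  have hre : HasDerivAt (fun τ => (z τ).re) (w t).re t :=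
    Complex.reCLM.hasFDerivAt.comp_hasDerivAt t hz
  have him : HasDerivAt (fun τ => (z τ).im) (w t).im t :=
    Complex.imCLM.hasFDerivAt.comp_hasDerivAt t hz
  have h2 := (hre.pow 2).add (him.pow 2)
  have h3 : (fun τ => Complex.normSq (z τ)) = fun τ => (z τ).re^2 + (z τ).im^2 := by
    funext τ; rw [Complex.normSq_apply]; ring
  rw [h3]
  convert h2 using 1
  · rfl
  · rfl
  · rfl
  · push_cast
    ring

lemma dissip_bound (z w : ℝ → ℂ) (t₀ T c ρ : ℝ) (hρ : 1 < ρ) (hc : 0 ≤ c)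
    (ht₀ : 0 < t₀) (hT : t₀ < T)
    (hzc : ContinuousOn z (Icc t₀ T))
    (hzd : ∀ t ∈ Ioo t₀ T, HasDerivAt z (w t) t)
    (hdis : ∀ t ∈ Ioo t₀ T,
      (z t).re * (w t).re + (z t).im * (w t).im ≤ ‖z t‖ * (c * t ^ (-ρ))) :
    ‖z T‖ ≤ ‖z t₀‖ + c * t₀ ^ (1 - ρ) / (ρ - 1) := by
  apply le_of_forall_pos_le_add
  intro δ hδ
  have hq_pos : ∀ t : ℝ, 0 < Complex.normSq (z t) + δ^2 := by
    intro t
    have := Complex.normSq_nonneg (z t)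
    nlinarith
  have hsqrt_pos : ∀ t : ℝ, 0 < Real.sqrt (Complex.normSq (z t) + δ^2) :=
    fun t => Real.sqrt_pos.mpr (hq_pos t)
  have hnorm_le : ∀ t : ℝ, ‖z t‖ ≤ Real.sqrt (Complex.normSq (z t) + δ^2) := by
    intro t
    have h1 : ‖z t‖ = Real.sqrt (Complex.normSq (z t)) := by
      rw [Complex.norm_def]
    rw [h1]
    exact Real.sqrt_le_sqrt (by nlinarith [sq_nonneg δ])
  set ψ : ℝ → ℝ := fun t => Real.sqrt (Complex.normSq (z t) + δ^2) + c * t^(1-ρ)/(ρ-1)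
    with hψ_def
  have hψd : ∀ t ∈ Ioo t₀ T, HasDerivAt ψ
      ((1 / (2 * Real.sqrt (Complex.normSq (z t) + δ^2)))
        * (2 * ((z t).re * (w t).re + (z t).im * (w t).im))
        + c * ((1-ρ) * t^(1-ρ-1))/(ρ-1)) t := by
    intro t ht
    have hu : HasDerivAt (fun τ => Real.sqrt (Complex.normSq (z τ) + δ^2))
        ((1 / (2 * Real.sqrt (Complex.normSq (z t) + δ^2)))
          * (2 * ((z t).re * (w t).re + (z t).im * (w t).im))) t := by
      have hq' := (dissip_sq_deriv (hzd t ht)).add_const (δ^2)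
      exact (Real.hasDerivAt_sqrt (ne_of_gt (hq_pos t))).comp t hq'
    have hφ : HasDerivAt (fun τ : ℝ => c * τ^(1-ρ)/(ρ-1))
        (c * ((1-ρ) * t^(1-ρ-1))/(ρ-1)) t :=
      ((Real.hasDerivAt_rpow_const
        (Or.inl (ne_of_gt (lt_trans ht₀ ht.1)))).const_mul c).div_const (ρ-1)
    exact hu.add hφ
  have hψ_deriv_nonpos : ∀ t ∈ Ioo t₀ T, deriv ψ t ≤ 0 := by
    intro t ht
    rw [(hψd t ht).deriv]
    have htpos : (0:ℝ) < t := lt_trans ht₀ ht.1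
    have hrw : c * ((1-ρ) * t^(1-ρ-1))/(ρ-1) = -(c * t^(-ρ)) := by
      have h9 : ρ - 1 ≠ 0 := ne_of_gt (by linarith)
      rw [show (1-ρ-1 : ℝ) = -ρ by ring]
      field_simp
      ring
    rw [hrw]
    have h1 : (1 / (2 * Real.sqrt (Complex.normSq (z t) + δ^2)))
        * (2 * ((z t).re * (w t).re + (z t).im * (w t).im)) ≤ c * t^(-ρ) := by
      rw [div_mul_eq_mul_div, one_mul]
      rw [div_le_iff₀ (mul_pos two_pos (hsqrt_pos t))]
      have h2 := hdis t ht
      have h3 := hnorm_le t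
      have h4 : (0:ℝ) ≤ c * t^(-ρ) := by
        have : (0:ℝ) < t^(-ρ) := Real.rpow_pos_of_pos htpos _
        positivity
      nlinarith [hsqrt_pos t, mul_le_mul_of_nonneg_right h3 h4]
    linarith
  have hψc : ContinuousOn ψ (Icc t₀ T) := by
    apply ContinuousOn.add
    · exact Real.continuous_sqrt.comp_continuousOn
        ((Complex.continuous_normSq.comp_continuousOn hzc).add continuousOn_const)
    · intro x hx
      have hx0 : x ≠ 0 := ne_of_gt (lt_of_lt_of_le ht₀ hx.1)
      have hca : ContinuousAt (fun y : ℝ => c * y ^ (1 - ρ) / (ρ - 1)) x :=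
        ((Real.continuousAt_rpow_const x (1-ρ) (Or.inl hx0)).const_mul c).div_const (ρ-1)
      exact hca.continuousWithinAt
  have hant : AntitoneOn ψ (Icc t₀ T) := by
    apply antitoneOn_of_deriv_nonpos (convex_Icc _ _) hψc
    · intro x hx
      rw [interior_Icc] at hx
      exact ((hψd x hx).differentiableAt).differentiableWithinAt
    · intro x hx
      rw [interior_Icc] at hx
      exact hψ_deriv_nonpos x hx
  have hTT := hant (left_mem_Icc.mpr hT.le) (right_mem_Icc.mpr hT.le) hT.le
  rw [hψ_def] at hTT
  simp only at hTT
  have h5 : Real.sqrt (Complex.normSq (z t₀) + δ^2) ≤ ‖z t₀‖ + δ := by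
    have h6 : Complex.normSq (z t₀) + δ^2 ≤ (‖z t₀‖ + δ)^2 := by
      have : Complex.normSq (z t₀) = ‖z t₀‖^2 := by
        rw [← Complex.sq_norm]
      nlinarith [norm_nonneg (z t₀)]
    calc Real.sqrt (Complex.normSq (z t₀) + δ^2) ≤ Real.sqrt ((‖z t₀‖ + δ)^2) :=
          Real.sqrt_le_sqrt h6
      _ = ‖z t₀‖ + δ := Real.sqrt_sq (by positivity)
  have h7 : (0:ℝ) ≤ c * T^(1-ρ)/(ρ-1) := by
    have h8 : (0:ℝ) < T^(1-ρ) := Real.rpow_pos_of_pos (lt_trans ht₀ hT) _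
    have h9 : (0:ℝ) < ρ - 1 := by linarith
    positivity
  have h10 := hnorm_le T
  linarith

lemma field_dissip (K : ℂ) (hK : 0 ≤ K.re) {M τ : ℝ} (hM0 : 0 ≤ M) (hτ : 0 < τ)
    (x Jt : ℂ) :
    x.re * (-(K / (2 * (τ : ℂ))) * gcube M x + Jt).re
      + x.im * (-(K / (2 * (τ : ℂ))) * gcube M x + Jt).im ≤ ‖x‖ * ‖Jt‖ := by
  obtain ⟨c, hc0, hc⟩ := gcube_smul hM0 x
  set w : ℂ := -(K / (2 * (τ : ℂ))) * gcube M x + Jt with hw_def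
  have hre : x.re * w.re + x.im * w.im = (starRingEnd ℂ x * w).re := by
    simp only [Complex.mul_re, Complex.conj_re, Complex.conj_im]
    ring
  rw [hre, hw_def, mul_add, Complex.add_re]
  have hterm1 : (starRingEnd ℂ x * (-(K / (2 * (τ : ℂ))) * gcube M x)).re ≤ 0 := by
    have h1 : starRingEnd ℂ x * (-(K / (2 * (τ : ℂ))) * gcube M x)
        = ((-(c * Complex.normSq x) : ℝ) : ℂ) * (K / (2 * (τ : ℂ))) := by
      rw [hc, Complex.real_smul]
      push_cast
      rw [show ((Complex.normSq x : ℝ) : ℂ) = x * (starRingEnd ℂ x) from (Complex.mul_conj x).symm]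
      ring
    rw [h1, Complex.re_ofReal_mul]
    have h2 : (K / (2 * (τ : ℂ))).re = K.re / (2 * τ) := by
      rw [show (2 * (τ : ℂ)) = ((2 * τ : ℝ) : ℂ) by push_cast; ring, Complex.div_ofReal_re]
    rw [h2]
    have h3 : 0 ≤ K.re / (2 * τ) := by positivity
    have h4 : 0 ≤ c * Complex.normSq x := mul_nonneg hc0 (Complex.normSq_nonneg x)
    nlinarith
  have hterm2 : (starRingEnd ℂ x * Jt).re ≤ ‖x‖ * ‖Jt‖ := by
    calc (starRingEnd ℂ x * Jt).re ≤ ‖starRingEnd ℂ x * Jt‖ := Complex.re_le_norm _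
      _ = ‖x‖ * ‖Jt‖ := by
        rw [norm_mul, Complex.norm_conj]
  linarith

lemma coef_norm (K : ℂ) {τ : ℝ} (hτ : 1 ≤ τ) : ‖-(K / (2 * (τ:ℂ)))‖ ≤ ‖K‖ := by
  rw [norm_neg, norm_div]
  have h2 : (1:ℝ) ≤ ‖(2 * (τ : ℂ))‖ := by
    rw [show (2 * (τ : ℂ)) = (((2 * τ : ℝ)) : ℂ) by push_cast; ring,
      Complex.norm_real, Real.norm_eq_abs, abs_of_nonneg (by linarith)]
    linarith
  calc ‖K‖ / ‖(2 * (τ : ℂ))‖ ≤ ‖K‖ / 1 :=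
        div_le_div_of_nonneg_left (norm_nonneg K) one_pos h2 |>.trans (le_refl _)
    _ = ‖K‖ := div_one _

lemma vfield_lip (K : ℂ) (t₀ M : ℝ) (ht₀ : 1 ≤ t₀) (hM0 : 0 ≤ M) (J : ℝ → ℂ) (t : ℝ) :
    LipschitzWith (‖K‖₊ * (4 * M.toNNReal^2))
      (fun z => -(K / (2 * ((max t t₀ : ℝ) : ℂ))) * gcube M z + J (max t t₀)) := by
  apply LipschitzWith.of_dist_le_mul
  intro x y
  rw [dist_eq_norm, dist_eq_norm]
  have hLcoe : ((‖K‖₊ * (4 * M.toNNReal^2) : NNReal) : ℝ) = ‖K‖ * (4 * M^2) := by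
    push_cast
    rw [Real.coe_toNNReal _ hM0]
  rw [hLcoe]
  have hdiff : (-(K / (2 * ((max t t₀ : ℝ) : ℂ))) * gcube M x + J (max t t₀))
      - (-(K / (2 * ((max t t₀ : ℝ) : ℂ))) * gcube M y + J (max t t₀))
      = -(K / (2 * ((max t t₀ : ℝ) : ℂ))) * (gcube M x - gcube M y) := by ring
  rw [hdiff, norm_mul]
  have hτ : (1:ℝ) ≤ max t t₀ := le_trans ht₀ (le_max_right t t₀)
  calc ‖-(K / (2 * ((max t t₀:ℝ) : ℂ)))‖ * ‖gcube M x - gcube M y‖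
      ≤ ‖K‖ * (4 * M^2 * ‖x - y‖) :=
        mul_le_mul (coef_norm K hτ) (gcube_lip hM0 x y) (norm_nonneg _) (norm_nonneg K)
    _ = ‖K‖ * (4 * M^2) * ‖x - y‖ := by ring


open Real in
/-- global existence and uniform bound with explicit constant
`C₀ = E₀(1 + c₀^(ρ-1)/(ρ-1))` for z' = -(K/(2t))|z|²z + J. -/
theorem perturbed_cubic_ode_global_bound
    (K z₀ : ℂ) (E₀ ε σ ρ κ c₀ t₀ : ℝ)
    (hK : 0 ≤ K.re) (hE₀ : 0 < E₀) (hε : 0 < ε) (hρ : 1 < ρ) (hκ : 0 ≤ κ)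
    (hc₀ : 0 < c₀) (ht₀ : 1 ≤ t₀)
    (ht₀l : c₀⁻¹ * Real.sqrt (1 + σ^2) < t₀)
    (ht₀u : t₀ < c₀ * Real.sqrt (1 + σ^2))
    (J : ℝ → ℂ) (hJcont : ContinuousOn J (Set.Ici t₀))
    (hz₀ : ‖z₀‖ ≤ E₀ * ε * (Real.sqrt (1 + σ^2)) ^ (-κ - ρ + 1))
    (hJ : ∀ t : ℝ, t₀ ≤ t →
      ‖J t‖ ≤ E₀ * ε * (Real.sqrt (1 + σ^2)) ^ (-κ) * t ^ (-ρ)) :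
    ∃ z : ℝ → ℂ,
      z t₀ = z₀ ∧
      ContinuousOn z (Set.Ici t₀) ∧
      (∀ t : ℝ, t₀ < t →
        HasDerivAt z (-(K/(2*t)) * (‖z t‖^2 : ℝ) * z t + J t) t) ∧
      (∀ t : ℝ, t₀ ≤ t →
        ‖z t‖ ≤ (E₀ * (1 + c₀ ^ (ρ - 1) / (ρ - 1))) * ε *
          (Real.sqrt (1 + σ^2)) ^ (-κ - ρ + 1)) := by
  have ht₀0 : (0:ℝ) < t₀ := lt_of_lt_of_le one_pos ht₀
  set s : ℝ := Real.sqrt (1 + σ^2) with hs_def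
  have hs0 : 0 < s := Real.sqrt_pos.mpr (by nlinarith [sq_nonneg σ])
  set A : ℝ := E₀ * ε * s ^ (-κ - ρ + 1) with hA_def
  set B : ℝ := (E₀ * (1 + c₀ ^ (ρ - 1) / (ρ - 1))) * ε * s ^ (-κ - ρ + 1) with hB_def
  set Q : ℝ := E₀ * ε * s ^ (-κ) * t₀ ^ (1 - ρ) / (ρ - 1) with hQ_def
  have hA0 : 0 < A := by
    have : (0:ℝ) < s ^ (-κ - ρ + 1) := Real.rpow_pos_of_pos hs0 _
    positivity
  have hQ0 : 0 < Q := by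
    rw [hQ_def]
    have h1 : (0:ℝ) < s ^ (-κ) := Real.rpow_pos_of_pos hs0 _
    have h2 : (0:ℝ) < t₀ ^ (1 - ρ) := Real.rpow_pos_of_pos ht₀0 _
    have h3 : (0:ℝ) < ρ - 1 := by linarith
    positivity
  have hB0 : 0 < B := by
    have h1 : (0:ℝ) < s ^ (-κ - ρ + 1) := Real.rpow_pos_of_pos hs0 _
    have h2 : (0:ℝ) < c₀ ^ (ρ - 1) := Real.rpow_pos_of_pos hc₀ _
    have h3 : (0:ℝ) < 1 + c₀ ^ (ρ - 1) / (ρ - 1) := by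
      have : (0:ℝ) < c₀ ^ (ρ - 1) / (ρ - 1) := by
        apply div_pos h2; linarith
      linarith
    positivity
  -- the key numeric inequality
  have hkey : A + Q ≤ B := by
    have h1 : t₀ ^ (1 - ρ) ≤ (c₀⁻¹ * s) ^ (1 - ρ) := by
      apply Real.rpow_le_rpow_of_nonpos (by positivity) ht₀l.le (by linarith)
    have h2 : (c₀⁻¹ * s) ^ (1 - ρ) = c₀ ^ (ρ - 1) * s ^ (1 - ρ) := by
      rw [Real.mul_rpow (by positivity) hs0.le]
      congr 1
      rw [show ρ - 1 = -(1 - ρ) by ring, Real.rpow_neg hc₀.le, ← Real.inv_rpow hc₀.le]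
    have h3 : s ^ (-κ) * s ^ (1 - ρ) = s ^ (-κ - ρ + 1) := by
      rw [← Real.rpow_add hs0]; ring_nf
    have h4 : Q ≤ E₀ * ε * (c₀ ^ (ρ - 1) / (ρ - 1)) * s ^ (-κ - ρ + 1) := by
      rw [hQ_def]
      have hρ1 : (0:ℝ) < ρ - 1 := by linarith
      rw [div_le_iff₀ hρ1]
      have h5 : t₀ ^ (1 - ρ) ≤ c₀ ^ (ρ - 1) * s ^ (1 - ρ) := h2 ▸ h1
      calc E₀ * ε * s ^ (-κ) * t₀ ^ (1 - ρ)
          ≤ E₀ * ε * s ^ (-κ) * (c₀ ^ (ρ - 1) * s ^ (1 - ρ)) := by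
            apply mul_le_mul_of_nonneg_left h5
            have : (0:ℝ) < s ^ (-κ) := Real.rpow_pos_of_pos hs0 _
            positivity
        _ = E₀ * ε * c₀ ^ (ρ - 1) * (s ^ (-κ) * s ^ (1 - ρ)) := by ring
        _ = E₀ * ε * c₀ ^ (ρ - 1) * s ^ (-κ - ρ + 1) := by rw [h3]
        _ = E₀ * ε * (c₀ ^ (ρ - 1) / (ρ - 1)) * s ^ (-κ - ρ + 1) * (ρ - 1) := by
            field_simp
    have : B = A + E₀ * ε * (c₀ ^ (ρ - 1) / (ρ - 1)) * s ^ (-κ - ρ + 1) := by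
      rw [hB_def, hA_def]; ring
    linarith
  set M : ℝ := B + 1 with hM_def
  have hM0 : (0:ℝ) ≤ M := by linarith
  have hBM : B < M := by linarith
  -- the truncated vector field
  obtain ⟨v, hv_def⟩ : ∃ v : ℝ → ℂ → ℂ,
      v = fun t z => -(K / (2 * ((max t t₀ : ℝ) : ℂ))) * gcube M z + J (max t t₀) :=
    ⟨_, rfl⟩
  have hmax_ge : ∀ t : ℝ, t₀ ≤ max t t₀ := fun t => le_max_right t t₀
  have hvlip : ∀ t : ℝ, LipschitzWith (‖K‖₊ * (4 * M.toNNReal^2)) (v t) := by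
    intro t
    rw [hv_def]
    exact vfield_lip K t₀ M ht₀ hM0 J t
  set Cb : ℝ := ‖K‖ * M^3 + E₀ * ε * s ^ (-κ) * t₀ ^ (-ρ) with hCb_def
  have hCb0 : 0 ≤ Cb := by
    rw [hCb_def]
    have h1 : (0:ℝ) < s ^ (-κ) := Real.rpow_pos_of_pos hs0 _
    have h2 : (0:ℝ) < t₀ ^ (-ρ) := Real.rpow_pos_of_pos ht₀0 _
    have h3 : (0:ℝ) ≤ ‖K‖ * M^3 :=
      mul_nonneg (norm_nonneg K) (pow_nonneg hM0 3)
    nlinarith [mul_pos (mul_pos (mul_pos hE₀ hε) h1) h2]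
  have hvnorm : ∀ (t : ℝ) (x : ℂ), ‖v t x‖ ≤ Cb := by
    intro t x
    rw [hv_def]
    have h1 : ‖-(K / (2 * ((max t t₀ : ℝ) : ℂ))) * gcube M x‖ ≤ ‖K‖ * M^3 := by
      rw [norm_mul]
      exact mul_le_mul (coef_norm K (le_trans ht₀ (hmax_ge t)))
        (gcube_norm_le hM0 x) (norm_nonneg _) (norm_nonneg K)
    have h2 : ‖J (max t t₀)‖ ≤ E₀ * ε * s ^ (-κ) * t₀ ^ (-ρ) := by
      have h3 := hJ (max t t₀) (hmax_ge t)
      have h4 : (max t t₀) ^ (-ρ) ≤ t₀ ^ (-ρ) :=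
        Real.rpow_le_rpow_of_nonpos ht₀0 (hmax_ge t) (by linarith)
      have h5 : (0:ℝ) ≤ E₀ * ε * s ^ (-κ) := by
        have : (0:ℝ) < s ^ (-κ) := Real.rpow_pos_of_pos hs0 _
        positivity
      calc ‖J (max t t₀)‖ ≤ E₀ * ε * s ^ (-κ) * (max t t₀) ^ (-ρ) := h3
        _ ≤ E₀ * ε * s ^ (-κ) * t₀ ^ (-ρ) := mul_le_mul_of_nonneg_left h4 h5
    calc ‖-(K / (2 * ((max t t₀ : ℝ) : ℂ))) * gcube M x + J (max t t₀)‖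
        ≤ ‖-(K / (2 * ((max t t₀ : ℝ) : ℂ))) * gcube M x‖ + ‖J (max t t₀)‖ :=
          norm_add_le _ _
      _ ≤ Cb := by rw [hCb_def]; exact add_le_add h1 h2
  have hvcont : ∀ x : ℂ, Continuous (fun t => v t x) := by
    intro x
    rw [hv_def]
    have hmaxc : Continuous (fun t : ℝ => max t t₀) := continuous_id.max continuous_const
    have hJc : Continuous (fun t : ℝ => J (max t t₀)) :=
      hJcont.comp_continuous hmaxc (fun t => hmax_ge t)
    have hden : Continuous (fun t : ℝ => (2 * ((max t t₀ : ℝ) : ℂ))) :=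
      continuous_const.mul (Complex.continuous_ofReal.comp hmaxc)
    have hcoef : Continuous (fun t : ℝ => -(K / (2 * ((max t t₀ : ℝ) : ℂ)))) := by
      apply Continuous.neg
      apply Continuous.div continuous_const hden
      intro t h
      have h2 : (2 * max t t₀ : ℝ) = 0 := by
        exact_mod_cast (by exact_mod_cast h :
          ((2 * max t t₀ : ℝ) : ℂ) = 0)
      nlinarith [hmax_ge t]
    exact (hcoef.mul continuous_const).add hJc
  obtain ⟨z, hz0, hzc, hzd⟩ :=
    global_ode_exists v (‖K‖₊ * (4 * M.toNNReal^2)) Cb t₀ z₀ hCb0 hvlip hvcont hvnorm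
  -- a priori bound
  have hbound : ∀ T : ℝ, t₀ ≤ T → ‖z T‖ ≤ B := by
    intro T hT
    rcases eq_or_lt_of_le hT with h | h
    · rw [← h, hz0]
      linarith
    · have happ := dissip_bound z (fun τ => v τ (z τ)) t₀ T (E₀ * ε * s ^ (-κ)) ρ hρ
        (by have : (0:ℝ) < s ^ (-κ) := Real.rpow_pos_of_pos hs0 _; positivity)
        ht₀0 h (hzc.mono (Set.Icc_subset_Ici_self)) (fun t ht => hzd t ht.1) ?_
      · rw [hz0] at happ
        have hQeq : E₀ * ε * s ^ (-κ) * t₀ ^ (1 - ρ) / (ρ - 1) = Q := by rw [hQ_def]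
        rw [show E₀ * ε * s ^ (-κ) * t₀ ^ (1 - ρ) / (ρ - 1) = Q from rfl] at happ
        linarith
      · intro t ht
        have hmax : max t t₀ = t := max_eq_left ht.1.le
        have hτpos : (0:ℝ) < max t t₀ := lt_of_lt_of_le ht₀0 (hmax_ge t)
        have hfd : (z t).re * (v t (z t)).re + (z t).im * (v t (z t)).im
            ≤ ‖z t‖ * ‖J (max t t₀)‖ := by
          rw [hv_def]
          exact field_dissip K hK hM0 hτpos (z t) (J (max t t₀))
        have hJb : ‖J (max t t₀)‖ ≤ E₀ * ε * s ^ (-κ) * t ^ (-ρ) := by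
          rw [hmax]; exact hJ t ht.1.le
        calc (z t).re * (v t (z t)).re + (z t).im * (v t (z t)).im
            ≤ ‖z t‖ * ‖J (max t t₀)‖ := hfd
          _ ≤ ‖z t‖ * (E₀ * ε * s ^ (-κ) * t ^ (-ρ)) :=
              mul_le_mul_of_nonneg_left hJb (norm_nonneg _)
  refine ⟨z, hz0, hzc, ?_, fun t ht => hbound t ht⟩
  intro t ht
  have h := hzd t ht
  have hmax : max t t₀ = t := max_eq_left ht.le
  have hzM : ‖z t‖ ≤ M := le_trans (hbound t ht.le) hBM.le
  have hveq : v t (z t) = -(K/(2*(t:ℂ))) * ((‖z t‖^2 : ℝ) : ℂ) * z t + J t := by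
    rw [hv_def]
    simp only
    rw [hmax, gcube_eq hzM]
    ring
  rwa [hveq] at h
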